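/- Let λ, μ be real numbers with λ > 1 > μ > 0, and let p, q be coprime positive integers with λ^p·μ^q = 1. Let f : ℝ² → ℝ be real-analytic in a neighborhood of the origin with f(λ·x, μ·y) = f(x,y) for all (x,y) in a neighborhood of (0,0). Then there exists a function g : ℝ → ℝ, real-analytic in a neighborhood of 0, such that f(x,y) = g(x^p · y^q) for all (x,y) in a neighborhood of (0,0). (In the resonant case, every real-analytic first integral of (x,y) ↦ (λx, μy) is a function of x^p y^q.) -/

import Mathlib

open Filter

private lemma cmm_expand {n : ℕ} (φ : ContinuousMultilinearMap ℝ (fun _ : Fin n => ℝ × ℝ) ℝ)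
    (x y : ℝ) :
    φ (fun _ => (x, y)) = ∑ s : Finset (Fin n),
      x ^ s.card * y ^ (n - s.card) *
        φ (s.piecewise (fun _ => ((1:ℝ),(0:ℝ))) (fun _ => ((0:ℝ),(1:ℝ)))) := by
  classical
  have hxy : (fun _ : Fin n => ((x:ℝ), y)) =
      (fun _ : Fin n => x • ((1:ℝ),(0:ℝ))) + (fun _ : Fin n => y • ((0:ℝ),(1:ℝ))) := by
    funext i; simp [Prod.ext_iff]
  have hadd := φ.toMultilinearMap.map_add_univ (fun _ : Fin n => x • ((1:ℝ),(0:ℝ)))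
    (fun _ : Fin n => y • ((0:ℝ),(1:ℝ)))
  simp only [ContinuousMultilinearMap.coe_coe] at hadd
  rw [hxy, hadd]
  refine Finset.sum_congr rfl fun s _ => ?_
  set e1 : ℝ × ℝ := (1, 0)
  set e2 : ℝ × ℝ := (0, 1)
  set v : Fin n → ℝ × ℝ := s.piecewise (fun _ => e1) (fun _ => e2) with hv
  have step1 : s.piecewise (fun _ : Fin n => x • e1) (fun _ => y • e2)
      = s.piecewise (fun i => x • (s.piecewise (fun _ : Fin n => e1) (fun _ => y • e2)) i)
        (s.piecewise (fun _ : Fin n => e1) (fun _ => y • e2)) := by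
    funext i
    by_cases hi : i ∈ s <;> simp [Finset.piecewise, hi]
  have step2 : s.piecewise (fun _ : Fin n => e1) (fun _ => y • e2)
      = sᶜ.piecewise (fun i => y • v i) v := by
    funext i
    by_cases hi : i ∈ s <;> simp [Finset.piecewise, hi, hv]
  have h1 := φ.toMultilinearMap.map_piecewise_smul (fun _ : Fin n => x)
    (s.piecewise (fun _ : Fin n => e1) (fun _ => y • e2)) s
  have h2 := φ.toMultilinearMap.map_piecewise_smul (fun _ : Fin n => y) v sᶜ
  simp only [ContinuousMultilinearMap.coe_coe] at h1 h2
  rw [step1, h1, step2, h2]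
  simp only [Finset.prod_const, smul_eq_mul, Finset.card_compl, Fintype.card_fin]
  ring

set_option maxHeartbeats 2000000 in
theorem stmt14 (l m : ℝ) (hl : 1 < l) (hm0 : 0 < m) (hm1 : m < 1)
    (p q : ℕ) (hp : 0 < p) (hq : 0 < q) (hpq : Nat.Coprime p q)
    (hres : l ^ p * m ^ q = 1)
    (f : ℝ × ℝ → ℝ) (hf : AnalyticAt ℝ f 0)
    (hinv : ∀ᶠ z : ℝ × ℝ in nhds 0, f (l * z.1, m * z.2) = f z) :
    ∃ g : ℝ → ℝ, AnalyticAt ℝ g 0 ∧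
      ∀ᶠ z : ℝ × ℝ in nhds 0, f z = g (z.1 ^ p * z.2 ^ q) := by
  classical
  have hl0 : (0:ℝ) < l := lt_trans one_pos hl
  obtain ⟨pf, r, hpf⟩ := hf
  -- the diagonal linear map
  set D : ℝ × ℝ →L[ℝ] ℝ × ℝ :=
    (l • (ContinuousLinearMap.fst ℝ ℝ ℝ)).prod (m • (ContinuousLinearMap.snd ℝ ℝ ℝ)) with hD
  have hDapp : ∀ z : ℝ × ℝ, D z = (l * z.1, m * z.2) := by
    intro z; simp [hD, ContinuousLinearMap.prod_apply, smul_eq_mul]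
  -- a radius r1 < r
  obtain ⟨r1, hr10, hr1r⟩ : ∃ r1 : NNReal, 0 < r1 ∧ (r1 : ENNReal) < r := by
    obtain ⟨r1, h0, h1⟩ := ENNReal.lt_iff_exists_nnreal_btwn.mp hpf.r_pos
    exact ⟨r1, by exact_mod_cast pos_iff_ne_zero.mpr (by rintro rfl; simp at h0), h1⟩
  obtain ⟨C, hC0, hC⟩ := pf.norm_mul_pow_le_of_lt_radius (lt_of_lt_of_le hr1r hpf.r_le)
  -- power series for f ∘ D
  set pD : FormalMultilinearSeries ℝ (ℝ × ℝ) ℝ := pf.compContinuousLinearMap D with hpD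
  set c0 : ℝ := max ‖D‖ 1 with hc0
  have hc01 : (1:ℝ) ≤ c0 := le_max_right _ _
  have hc0pos : (0:ℝ) < c0 := lt_of_lt_of_le one_pos hc01
  set cn : NNReal := ⟨c0, hc0pos.le⟩ with hcn
  have hcnne : cn ≠ 0 := by
    simp only [hcn, ne_eq, ← NNReal.coe_eq_zero]
    exact fun h => hc0pos.ne' (congrArg NNReal.toReal h)
  set ρ : NNReal := r1 / cn with hρ
  have hρpos : 0 < ρ := by
    rw [hρ]
    exact div_pos hr10 (pos_iff_ne_zero.mpr hcnne)
  have hρc : (ρ : ℝ) * c0 = r1 := by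
    rw [hρ, NNReal.coe_div]
    field_simp [hcn]
    rfl
  have hpDn : ∀ n, ‖pD n‖ * (ρ:ℝ) ^ n ≤ C := by
    intro n
    have h1 : ‖pD n‖ ≤ ‖pf n‖ * c0 ^ n := by
      refine le_trans (ContinuousMultilinearMap.norm_compContinuousLinearMap_le _ _) ?_
      have : ∏ _i : Fin n, ‖D‖ ≤ c0 ^ n := by
        rw [Finset.prod_const, Finset.card_fin]
        exact pow_le_pow_left₀ (norm_nonneg _) (le_max_left _ _) n
      exact mul_le_mul_of_nonneg_left this (norm_nonneg _)
    calc ‖pD n‖ * (ρ:ℝ) ^ n ≤ (‖pf n‖ * c0 ^ n) * (ρ:ℝ) ^ n := by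
          have : (0:ℝ) ≤ (ρ:ℝ) ^ n := by positivity
          exact mul_le_mul_of_nonneg_right h1 this
      _ = ‖pf n‖ * ((ρ:ℝ) * c0) ^ n := by ring
      _ = ‖pf n‖ * (r1:ℝ) ^ n := by rw [hρc]
      _ ≤ C := hC n
  have hDball : HasFPowerSeriesOnBall (f ∘ D) pD 0 ρ := by
    refine ⟨pD.le_radius_of_bound C hpDn, by exact_mod_cast hρpos, ?_⟩
    intro y hy
    rw [EMetric.mem_ball, edist_zero_right] at hy
    have hyρ : ‖y‖ < (ρ:ℝ) := by exact_mod_cast hy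
    have hDy : D y ∈ Metric.eball (0 : ℝ × ℝ) r := by
      rw [EMetric.mem_ball, edist_zero_right]
      have h1 : ‖D y‖ ≤ c0 * ‖y‖ := by
        refine le_trans (D.le_opNorm y) ?_
        gcongr
        exact le_max_left _ _
      have h2 : ‖D y‖ < (r1:ℝ) := by
        calc ‖D y‖ ≤ c0 * ‖y‖ := h1
          _ < c0 * (ρ:ℝ) := by gcongr
          _ = (r1:ℝ) := by rw [mul_comm]; exact hρc
      calc (‖D y‖₊ : ENNReal) < (r1 : ENNReal) := by exact_mod_cast h2
        _ < r := hr1r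
    have hsum := hpf.hasSum hDy
    simp only [zero_add] at hsum ⊢
    have hfe : (fun n => pD n fun _ => y) = fun n => pf n fun _ => D y := by
      funext n
      rw [hpD, FormalMultilinearSeries.compContinuousLinearMap_apply]
      congr 1
    show HasSum (fun n => pD n fun _ => y) (f (D y))
    rw [hfe]
    exact hsum
  -- key invariance identity at the level of homogeneous components
  have hzero : HasFPowerSeriesAt (0 : ℝ × ℝ → ℝ) (pD - pf) 0 := by
    have h1 : HasFPowerSeriesAt (f ∘ D - f) (pD - pf) 0 :=
      hDball.hasFPowerSeriesAt.sub hpf.hasFPowerSeriesAt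
    refine h1.congr ?_
    filter_upwards [hinv] with z hz
    simp [Function.comp, hDapp z, hz]
  have hkey : ∀ (n : ℕ) (z : ℝ × ℝ),
      pf n (fun _ => ((l * z.1 : ℝ), (m * z.2 : ℝ))) = pf n (fun _ => z) := by
    intro n z
    have h0 := hzero.apply_eq_zero n z
    have h1 : (pD - pf) n = pD n - pf n := rfl
    rw [h1] at h0
    have h2 : pD n (fun _ => z) = pf n (fun _ => (l * z.1, m * z.2)) := by
      rw [hpD, FormalMultilinearSeries.compContinuousLinearMap_apply]
      have : (⇑D ∘ fun _ : Fin n => z) = fun _ : Fin n => ((l * z.1 : ℝ), (m * z.2 : ℝ)) := by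
        funext i; exact hDapp z
      rw [this]
    have := sub_eq_zero.mp (by simpa using h0)
    rw [← h2, this]
  -- resonance relation on exponents
  have hlog : ∀ j k : ℕ, l ^ j * m ^ k = 1 → j * q = k * p := by
    intro j k h
    have hll : 0 < Real.log l := Real.log_pos hl
    have hjk : (j:ℝ) * Real.log l + (k:ℝ) * Real.log m = 0 := by
      have := congrArg Real.log h
      rwa [Real.log_mul (by positivity) (by positivity), Real.log_pow, Real.log_pow,
        Real.log_one] at this
    have hpq' : (p:ℝ) * Real.log l + (q:ℝ) * Real.log m = 0 := by
      have := congrArg Real.log hres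
      rwa [Real.log_mul (by positivity) (by positivity), Real.log_pow, Real.log_pow,
        Real.log_one] at this
    have key : ((j:ℝ) * q - (k:ℝ) * p) * Real.log l = 0 := by nlinarith [hjk, hpq']
    have : (j:ℝ) * q = (k:ℝ) * p := by
      rcases mul_eq_zero.mp key with h' | h'
      · linarith
      · exact absurd h' hll.ne'
    exact_mod_cast this
  set c : ℕ → ℝ := fun N => pf (N * (p + q)) (fun _ => ((1:ℝ), (1:ℝ))) with hcdef
  have hmain : ∀ n : ℕ,
      (¬ (p + q) ∣ n → ∀ z : ℝ × ℝ, pf n (fun _ => z) = 0) ∧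
      (∀ N, n = N * (p + q) → ∀ z : ℝ × ℝ,
        pf n (fun _ => z) = c N * (z.1 ^ p * z.2 ^ q) ^ N) := by
    intro n
    set A : Finset (Fin n) → ℝ :=
      fun s => pf n (s.piecewise (fun _ => ((1:ℝ),(0:ℝ))) (fun _ => ((0:ℝ),(1:ℝ)))) with hA
    set B : ℕ → ℝ :=
      fun j => ∑ s ∈ Finset.univ.filter (fun s : Finset (Fin n) => s.card = j), A s with hB
    have hexp : ∀ x y : ℝ, pf n (fun _ => (x, y)) =
        ∑ j ∈ Finset.range (n+1), x ^ j * y ^ (n - j) * B j := by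
      intro x y
      rw [cmm_expand (pf n) x y]
      have hmaps : ∀ s : Finset (Fin n), s ∈ Finset.univ → s.card ∈ Finset.range (n+1) :=
        fun s _ => Finset.mem_range.mpr (Nat.lt_succ_of_le (by
          simpa using Finset.card_le_univ s))
      rw [← Finset.sum_fiberwise_of_maps_to hmaps
        (fun s => x ^ s.card * y ^ (n - s.card) * A s)]
      refine Finset.sum_congr rfl fun j hj => ?_
      rw [hB]
      rw [Finset.mul_sum]
      refine Finset.sum_congr rfl fun s hs => ?_
      have hcard : s.card = j := by simpa using (Finset.mem_filter.mp hs).2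
      rw [hcard]
    have hvan : ∀ j, (l ^ j * m ^ (n - j) - 1) * B j = 0 := by
      have hpoly : (∑ j ∈ Finset.range (n+1),
          Polynomial.C ((l ^ j * m ^ (n - j) - 1) * B j) * Polynomial.X ^ j)
          = (0 : Polynomial ℝ) := by
        apply Polynomial.funext
        intro x
        have h1 := hexp (l * x) (m * 1)
        have h2 := hexp x 1
        have h3 := hkey n (x, 1)
        simp only [Polynomial.eval_finset_sum, Polynomial.eval_mul, Polynomial.eval_C,
          Polynomial.eval_pow, Polynomial.eval_X, Polynomial.eval_zero]
        have key2 : ∑ j ∈ Finset.range (n+1), (l*x) ^ j * (m*1) ^ (n-j) * B j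
            = ∑ j ∈ Finset.range (n+1), x ^ j * (1:ℝ) ^ (n-j) * B j := by
          rw [← h1, ← h2]
          exact h3
        have expand : ∀ j ∈ Finset.range (n+1),
            (l ^ j * m ^ (n-j) - 1) * B j * x ^ j
            = (l*x) ^ j * (m*1) ^ (n-j) * B j - x ^ j * (1:ℝ) ^ (n-j) * B j := by
          intro j _
          ring
        rw [Finset.sum_congr rfl expand, Finset.sum_sub_distrib, key2, sub_self]
      intro j
      by_cases hj : j ≤ n
      · have hco := congrArg (fun P => Polynomial.coeff P j) hpoly
        simp only [Polynomial.finset_sum_coeff, Polynomial.coeff_C_mul, Polynomial.coeff_X_pow,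
          Polynomial.coeff_zero, mul_ite, mul_one, mul_zero] at hco
        rwa [Finset.sum_ite_eq (Finset.range (n+1)) j
          (fun j => (l ^ j * m ^ (n - j) - 1) * B j),
          if_pos (Finset.mem_range.mpr (Nat.lt_succ_of_le hj))] at hco
      · have hBj : B j = 0 := by
          rw [hB]
          apply Finset.sum_eq_zero
          intro s hs
          exfalso
          have := (Finset.mem_filter.mp hs).2
          have hle : s.card ≤ n := by simpa using Finset.card_le_univ s
          omega
        simp [hBj]
    have hBzero : ∀ j ≤ n, B j ≠ 0 → j * (p + q) = n * p := by
      intro j hj hBj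
      have h1 : l ^ j * m ^ (n - j) = 1 := by
        rcases mul_eq_zero.mp (hvan j) with h' | h'
        · linarith [sub_eq_zero.mp h']
        · exact absurd h' hBj
      have h2 := hlog j (n - j) h1
      calc j * (p + q) = j * p + j * q := by ring
        _ = j * p + (n - j) * p := by rw [h2]
        _ = (j + (n - j)) * p := by ring
        _ = n * p := by rw [Nat.add_sub_cancel' hj]
    have hco : Nat.Coprime (p + q) p := by
      have h1 : Nat.Coprime q p := hpq.symm
      have := Nat.coprime_add_self_left.mpr h1
      rwa [Nat.add_comm q p] at this
    constructor
    · intro hdvd z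
      have hz : pf n (fun _ => z) = pf n (fun _ => (z.1, z.2)) := rfl
      rw [hz, hexp z.1 z.2]
      apply Finset.sum_eq_zero
      intro j hj
      have hBj : B j = 0 := by
        by_contra hne
        have h2 := hBzero j (Nat.lt_succ_iff.mp (Finset.mem_range.mp hj)) hne
        have hdv : (p + q) ∣ n * p := ⟨j, by rw [← h2]; ring⟩
        exact hdvd (hco.dvd_of_dvd_mul_right hdv)
      simp [hBj]
    · intro N hN z
      have hnpq : n = N * p + N * q := by rw [hN]; ring
      have hNp_le : N * p ≤ n := by omega
      have hsub : n - N * p = N * q := by omega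
      have hBj0 : ∀ j ≤ n, j ≠ N * p → B j = 0 := by
        intro j hj hne
        by_contra hBne
        have h2 := hBzero j hj hBne
        rw [hN] at h2
        have : j * (p + q) = (N * p) * (p + q) := by rw [h2]; ring
        exact hne (Nat.eq_of_mul_eq_mul_right (by omega) this)
      have hform : ∀ x y : ℝ, pf n (fun _ => (x, y)) = x ^ (N*p) * y ^ (N*q) * B (N*p) := by
        intro x y
        rw [hexp x y]
        rw [Finset.sum_eq_single_of_mem (N*p)
          (Finset.mem_range.mpr (Nat.lt_succ_of_le hNp_le))
          (fun j hj hne => by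
            rw [hBj0 j (Nat.lt_succ_iff.mp (Finset.mem_range.mp hj)) hne, mul_zero])]
        rw [hsub]
      have hc1 : c N = B (N*p) := by
        have := hform 1 1
        rw [hcdef]
        simp only []
        rw [← hN]
        rw [this]
        simp
      have hz : pf n (fun _ => z) = pf n (fun _ => (z.1, z.2)) := rfl
      rw [hz, hform z.1 z.2, hc1]
      have hpow : (z.1 ^ p * z.2 ^ q) ^ N = z.1 ^ (N*p) * z.2 ^ (N*q) := by
        rw [mul_pow, ← pow_mul, ← pow_mul, Nat.mul_comm p N, Nat.mul_comm q N]
      rw [hpow]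
      ring
  -- the one-variable power series for g
  set Q : FormalMultilinearSeries ℝ ℝ ℝ :=
    fun N => c N • ContinuousMultilinearMap.mkPiAlgebraFin ℝ N ℝ with hQ
  have hcbound : ∀ N, |c N| ≤ ‖pf (N * (p+q))‖ := by
    intro N
    have h1 := (pf (N * (p+q))).le_opNorm (fun _ => ((1:ℝ), (1:ℝ)))
    have h2 : ∏ _i : Fin (N*(p+q)), ‖((1:ℝ),(1:ℝ))‖ = 1 := by
      have : ‖((1:ℝ),(1:ℝ))‖ = 1 := by
        rw [Prod.norm_def]
        simp
      rw [this]
      simp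
    rw [h2, mul_one] at h1
    simpa [hcdef, Real.norm_eq_abs] using h1
  have hQnorm : ∀ N, ‖Q N‖ = |c N| := by
    intro N
    show ‖c N • ContinuousMultilinearMap.mkPiAlgebraFin ℝ N ℝ‖ = |c N|
    rw [norm_smul (c N) (ContinuousMultilinearMap.mkPiAlgebraFin ℝ N ℝ),
      ContinuousMultilinearMap.norm_mkPiAlgebraFin, mul_one, Real.norm_eq_abs]
  have hQbound : ∀ N, ‖Q N‖ * ((r1:ℝ) ^ (p+q)) ^ N ≤ C := by
    intro N
    have h2 : ((r1:ℝ) ^ (p+q)) ^ N = (r1:ℝ) ^ (N * (p+q)) := by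
      rw [← pow_mul, Nat.mul_comm]
    rw [hQnorm N, h2]
    calc |c N| * (r1:ℝ) ^ (N*(p+q)) ≤ ‖pf (N*(p+q))‖ * (r1:ℝ) ^ (N*(p+q)) :=
          mul_le_mul_of_nonneg_right (hcbound N) (by positivity)
      _ ≤ C := hC _
  have hQrad : ((r1 ^ (p+q) : NNReal) : ENNReal) ≤ Q.radius := by
    apply Q.le_radius_of_bound C
    intro N
    have hco : ((r1 ^ (p+q) : NNReal) : ℝ) = (r1:ℝ) ^ (p+q) := by push_cast; ring
    rw [hco]
    exact hQbound N
  have hQpos : (0 : ENNReal) < Q.radius := by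
    refine lt_of_lt_of_le ?_ hQrad
    exact_mod_cast pow_pos hr10 (p+q)
  have hQball := Q.hasFPowerSeriesOnBall hQpos
  refine ⟨Q.sum, hQball.analyticAt, ?_⟩
  have hball : Metric.ball (0 : ℝ × ℝ) (r1:ℝ) ∈ nhds (0 : ℝ × ℝ) :=
    Metric.ball_mem_nhds 0 (by exact_mod_cast hr10)
  filter_upwards [hball] with z hz
  rw [Metric.mem_ball, dist_zero_right] at hz
  set t : ℝ := z.1 ^ p * z.2 ^ q with ht
  have hzr : z ∈ Metric.eball (0 : ℝ × ℝ) r := by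
    rw [EMetric.mem_ball, edist_zero_right]
    calc (‖z‖₊ : ENNReal) < (r1 : ENNReal) := by exact_mod_cast hz
      _ < r := hr1r
  have hs1 : HasSum (fun n => pf n (fun _ => z)) (f z) := by
    have := hpf.hasSum hzr
    simpa using this
  have htlt : ‖t‖ < (r1:ℝ) ^ (p+q) := by
    have h1 : |z.1| ≤ ‖z‖ := by
      rw [← Real.norm_eq_abs]
      exact norm_fst_le z
    have h2 : |z.2| ≤ ‖z‖ := by
      rw [← Real.norm_eq_abs]
      exact norm_snd_le z
    calc ‖t‖ = |z.1| ^ p * |z.2| ^ q := by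
          rw [ht, Real.norm_eq_abs, abs_mul, abs_pow, abs_pow]
      _ ≤ ‖z‖ ^ p * ‖z‖ ^ q := by
          apply mul_le_mul (pow_le_pow_left₀ (abs_nonneg _) h1 p)
            (pow_le_pow_left₀ (abs_nonneg _) h2 q) (by positivity) (by positivity)
      _ = ‖z‖ ^ (p+q) := by rw [← pow_add]
      _ < (r1:ℝ) ^ (p+q) := by
          apply pow_lt_pow_left₀ hz (norm_nonneg z)
          omega
  have htball : t ∈ Metric.eball (0:ℝ) Q.radius := by
    rw [EMetric.mem_ball, edist_zero_right]
    refine lt_of_lt_of_le ?_ hQrad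
    have : ‖t‖ < ((r1 ^ (p+q) : NNReal) : ℝ) := by push_cast; exact htlt
    exact_mod_cast this
  have hs2 : HasSum (fun N => c N * t ^ N) (Q.sum t) := by
    have hsum := hQball.hasSum htball
    simp only [zero_add] at hsum
    have hfe : (fun N => Q N fun _ => t) = fun N => c N * t ^ N := by
      funext N
      show (c N • ContinuousMultilinearMap.mkPiAlgebraFin ℝ N ℝ) (fun _ => t) = c N * t ^ N
      rw [ContinuousMultilinearMap.smul_apply, ContinuousMultilinearMap.mkPiAlgebraFin_apply,
        List.ofFn_const, List.prod_replicate, smul_eq_mul]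
    rw [← hfe]
    exact hsum
  have hinj : Function.Injective (fun N : ℕ => N * (p+q)) := by
    intro a b hab
    simp only [] at hab
    exact Nat.eq_of_mul_eq_mul_right (by omega) hab
  have hvanish : ∀ n ∉ Set.range (fun N : ℕ => N * (p+q)), pf n (fun _ => z) = 0 := by
    intro n hn
    apply (hmain n).1
    intro hdvd
    obtain ⟨N, rfl⟩ := hdvd
    exact hn ⟨N, by ring⟩
  have hcomp : ((fun n => pf n (fun _ => z)) ∘ (fun N : ℕ => N * (p+q)))
      = fun N => c N * t ^ N := by
    funext N
    exact (hmain (N*(p+q))).2 N rfl z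
  have hs3 : HasSum (fun n => pf n (fun _ => z)) (Q.sum t) := by
    rw [← Function.Injective.hasSum_iff hinj hvanish, hcomp]
    exact hs2
  exact hs1.unique hs3
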